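/- Let R be a commutative ring, let x_1,…,x_n, c ∈ R, and let λ = (λ_1 > ⋯ > λ_n ≥ 1) be a strict partition of length n. In R[[z_1,…,z_n]], the coefficient of z_1^{λ_1}⋯z_n^{λ_n} in Π_{k=1}^n (1 + c·z_k) · Σ_{σ ∈ S_n} sgn(σ) Π_{j=1}^n (1 − x_{σ(j)}·z_j)^{−1} equals Π_{k=1}^n (x_k + c) · det_{1≤i,j≤n}( x_i^{λ_j − 1} ). (With c = t_n x_n and after dividing by the Vandermonde Π_{i<j}(x_i − x_j), this is the key identity ('lasttoshow') used in the proof of Theorem 2, expressing the coefficient extraction as Π_k (x_k + t_n x_n) · s_{λ−ρ}(x).) -/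

import Mathlib

/-- The geometric series `∑_{m ≥ 0} a^m z_j^m = (1 - a z_j)⁻¹` in `R[[z_1, …, z_n]]`. -/
noncomputable def geom {R : Type*} [CommRing R] {n : ℕ} (a : R) (j : Fin n) :
    MvPowerSeries (Fin n) R :=
  fun d => if d = Finsupp.single j (d j) then a ^ (d j) else 0

open MvPowerSeries Finsupp in
lemma coeff_diag_prod {R : Type*} [CommRing R] {n : ℕ}
    (F : Fin n → MvPowerSeries (Fin n) R) (g : Fin n → ℕ → R)
    (hF : ∀ j d, MvPowerSeries.coeff (R := R) d (F j)
      = if d = Finsupp.single j (d j) then g j (d j) else 0)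
    (v : Fin n →₀ ℕ) :
    MvPowerSeries.coeff (R := R) v (∏ j : Fin n, F j) = ∏ j : Fin n, g j (v j) := by
  classical
  rw [MvPowerSeries.coeff_prod]
  set l₀ : Fin n →₀ (Fin n →₀ ℕ) :=
    Finsupp.equivFunOnFinite.symm (fun j => Finsupp.single j (v j)) with hl₀
  have hl₀app : ∀ j, l₀ j = Finsupp.single j (v j) := fun j => rfl
  rw [Finset.sum_eq_single l₀]
  · refine Finset.prod_congr rfl fun j _ => ?_
    rw [hl₀app, hF]
    simp
  · intro l hl hne
    simp only [Finset.mem_finsuppAntidiag] at hl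
    have hsum : ∑ j : Fin n, l j = v := hl.1
    by_cases hall : ∀ j, l j = Finsupp.single j (l j j)
    · exfalso
      have hv : ∀ i, l i i = v i := by
        intro i
        have := DFunLike.congr_fun hsum i
        simp only [Finsupp.coe_finset_sum, Finset.sum_apply] at this
        rw [← this]
        rw [Finset.sum_eq_single i]
        · intro b _ hb
          rw [hall b, Finsupp.single_eq_of_ne hb.symm]
        · simp
      apply hne
      ext j i
      rw [hl₀app, hall j, hv j]
    · push_neg at hall
      obtain ⟨j, hj⟩ := hall
      refine Finset.prod_eq_zero (Finset.mem_univ j) ?_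
      rw [hF, if_neg hj]
  · intro h
    exfalso
    apply h
    rw [Finset.mem_finsuppAntidiag]
    constructor
    · simp only [hl₀app]
      exact Finsupp.univ_sum_single v
    · exact Finset.subset_univ _

open MvPowerSeries Finsupp in
lemma coeff_factor {R : Type*} [CommRing R] {n : ℕ} (a c : R) (j : Fin n)
    (d : Fin n →₀ ℕ) :
    MvPowerSeries.coeff (R := R) d ((1 + MvPowerSeries.C (σ := Fin n) (R := R) c * MvPowerSeries.X j)
        * geom a j)
    = if d = Finsupp.single j (d j) then
        (if d j = 0 then 1 else (a + c) * a ^ (d j - 1)) else 0 := by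
  classical
  have hXg : ∀ e : Fin n →₀ ℕ, MvPowerSeries.coeff (R := R) e (MvPowerSeries.X j * geom a j)
      = if Finsupp.single j 1 ≤ e then geom a j (e - Finsupp.single j 1) else 0 := by
    intro e
    rw [MvPowerSeries.X, MvPowerSeries.coeff_monomial_mul]
    split_ifs <;> simp [MvPowerSeries.coeff_apply]
  rw [add_mul, one_mul, mul_assoc, map_add, MvPowerSeries.coeff_C_mul, hXg]
  have hcg : MvPowerSeries.coeff (R := R) d (geom a j)
      = if d = Finsupp.single j (d j) then a ^ (d j) else 0 := rfl
  rw [hcg]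
  by_cases hd : d = Finsupp.single j (d j)
  · rw [if_pos hd, if_pos hd]
    by_cases h0 : d j = 0
    · have hle : ¬ Finsupp.single j 1 ≤ d := by
        intro hle
        have := hle j
        simp [h0] at this
      rw [if_neg hle, if_pos h0, h0]
      simp
    · have h1 : 1 ≤ d j := Nat.one_le_iff_ne_zero.2 h0
      have hle : Finsupp.single j 1 ≤ d := by
        intro i
        by_cases hij : i = j
        · subst hij; simpa using h1
        · simp [Finsupp.single_eq_of_ne hij]
      rw [if_pos hle, if_neg h0]
      have hsub : d - Finsupp.single j 1 = Finsupp.single j (d j - 1) := by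
        conv_lhs => rw [hd]
        ext i
        by_cases hij : i = j
        · subst hij; simp [Finsupp.tsub_apply]
        · simp [Finsupp.tsub_apply, Finsupp.single_eq_of_ne (Ne.symm hij)]
      rw [hsub]
      have : geom a j (Finsupp.single j (d j - 1)) = a ^ (d j - 1) := by
        simp [geom]
      rw [this]
      obtain ⟨m, hm⟩ := Nat.exists_eq_succ_of_ne_zero h0
      rw [hm]
      simp [pow_succ]
      ring
  · rw [if_neg hd, if_neg hd]
    have h2 : (if Finsupp.single j 1 ≤ d then geom a j (d - Finsupp.single j 1) else 0) = 0 := by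
      split_ifs with hle
      · set e : Fin n →₀ ℕ := d - Finsupp.single j 1 with he
        have hne : e ≠ Finsupp.single j (e j) := by
          intro heq
          apply hd
          have h1 : 1 ≤ d j := by simpa using hle j
          have hej : e j + 1 = d j := by
            rw [he, Finsupp.tsub_apply]
            simp only [Finsupp.single_eq_same]
            omega
          calc d = e + Finsupp.single j 1 := (tsub_add_cancel_of_le hle).symm
            _ = Finsupp.single j (e j) + Finsupp.single j 1 := by rw [← heq]
            _ = Finsupp.single j (e j + 1) := by rw [Finsupp.single_add]
            _ = Finsupp.single j (d j) := by rw [hej]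
        show geom a j e = 0
        simp only [geom, if_neg hne]
      · rfl
    rw [h2, mul_zero, add_zero]

/-- the key coefficient identity (`lasttoshow`, multiplied through by the
Vandermonde) used in the proof of Theorem 2. -/
theorem stmt9 {R : Type*} [CommRing R] (n : ℕ) (x : Fin n → R) (c : R)
    (lam : Fin n → ℕ) (hlam : StrictAnti lam) (hlam1 : ∀ i, 1 ≤ lam i) :
    MvPowerSeries.coeff (R := R) (Finsupp.equivFunOnFinite.symm lam)
      ((∏ k : Fin n, (1 + MvPowerSeries.C (σ := Fin n) (R := R) c * MvPowerSeries.X k)) *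
        ∑ σ : Equiv.Perm (Fin n), (Equiv.Perm.sign σ : ℤ) • ∏ j : Fin n, geom (x (σ j)) j)
    = (∏ k : Fin n, (x k + c)) *
      Matrix.det (Matrix.of fun i j : Fin n => x i ^ (lam j - 1)) := by
  classical
  have hrw : (∏ k : Fin n, (1 + MvPowerSeries.C (σ := Fin n) (R := R) c * MvPowerSeries.X k)) *
        ∑ σ : Equiv.Perm (Fin n), (Equiv.Perm.sign σ : ℤ) • ∏ j : Fin n, geom (x (σ j)) j
      = ∑ σ : Equiv.Perm (Fin n), (Equiv.Perm.sign σ : ℤ) •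
          ∏ j : Fin n, ((1 + MvPowerSeries.C (σ := Fin n) (R := R) c * MvPowerSeries.X j)
            * geom (x (σ j)) j) := by
    rw [Finset.mul_sum]
    refine Finset.sum_congr rfl fun σ _ => ?_
    rw [mul_smul_comm, ← Finset.prod_mul_distrib]
  rw [hrw, map_sum]
  have key : ∀ σ : Equiv.Perm (Fin n),
      MvPowerSeries.coeff (R := R) (Finsupp.equivFunOnFinite.symm lam)
        (∏ j : Fin n, ((1 + MvPowerSeries.C (σ := Fin n) (R := R) c * MvPowerSeries.X j)
          * geom (x (σ j)) j))
      = ∏ j : Fin n, ((x (σ j) + c) * x (σ j) ^ (lam j - 1)) := by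
    intro σ
    rw [coeff_diag_prod _ (fun j m => if m = 0 then 1 else (x (σ j) + c) * x (σ j) ^ (m - 1))
      (fun j d => coeff_factor (x (σ j)) c j d)]
    refine Finset.prod_congr rfl fun j _ => ?_
    have h1 : (Finsupp.equivFunOnFinite.symm lam) j = lam j := rfl
    rw [h1, if_neg (by have := hlam1 j; omega)]
  simp_rw [map_zsmul, key]
  rw [Matrix.det_apply, Finset.mul_sum]
  refine Finset.sum_congr rfl fun σ _ => ?_
  rw [Finset.prod_mul_distrib]
  rw [Equiv.prod_comp σ (fun k => x k + c)]
  rw [Units.smul_def, zsmul_eq_mul, zsmul_eq_mul]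
  simp only [Matrix.of_apply]
  ring
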